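/- Let I be a set and F a filter on I which is the intersection of finitely many ultrafilters on I. Then the finite set of ultrafilters having F as intersection is unique; that is, if U_0 ∩ … ∩ U_{m-1} = V_0 ∩ … ∩ V_{l-1} = F with U_0, …, U_{m-1} distinct ultrafilters and V_0, …, V_{l-1} distinct ultrafilters, then {U_0, …, U_{m-1}} = {V_0, …, V_{l-1}}. Moreover, the cardinality n of this unique set is the least natural number n such that for every partition of I into n+1 subsets J_0, …, J_n, at least one m ≤ n has I − J_m ∈ F. -/

import Mathlib

universe u

open Function

private lemma ultra_le_finset_sup {α : Type*} {I : Type u} (W : Ultrafilter I)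
    (s : Finset α) (f : α → Filter I) (h : (W : Filter I) ≤ s.sup f) :
    ∃ j ∈ s, (W : Filter I) ≤ f j := by
  classical
  induction s using Finset.induction_on with
  | empty =>
      simp only [Finset.sup_empty, le_bot_iff] at h
      exact absurd h W.neBot.ne
  | insert a s ha ih =>
      rw [Finset.sup_insert, Ultrafilter.le_sup_iff] at h
      rcases h with h | h
      · exact ⟨_, Finset.mem_insert_self _ _, h⟩
      · obtain ⟨j, hj, hle⟩ := ih h
        exact ⟨j, Finset.mem_insert_of_mem hj, hle⟩

/-- If a filter `F` on `I` is written in two ways as an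
intersection of finitely many distinct ultrafilters, the two (finite) sets of
ultrafilters coincide; moreover the cardinality `m` of this unique set is the
least `n` such that every partition of `I` into `n + 1` subsets has a part
whose complement lies in `F`. -/
theorem unique_finite_set_of_ultrafilters {I : Type u} (F : Filter I)
    {m l : ℕ} (U : Fin m → Ultrafilter I) (V : Fin l → Ultrafilter I)
    (hU : Function.Injective U) (hV : Function.Injective V)
    (hFU : F = ⨆ j, (U j : Filter I)) (hFV : F = ⨆ j, (V j : Filter I)) :
    Set.range U = Set.range V ∧
    IsLeast {n : ℕ | ∀ J : Fin (n + 1) → Set I,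
        Pairwise (Disjoint on J) → (⋃ s, J s) = Set.univ →
        ∃ s, (J s)ᶜ ∈ F} m := by

  classical
  have hmemF : ∀ s : Set I, s ∈ F ↔ ∀ j, s ∈ U j := by
    intro s; rw [hFU, Filter.mem_iSup]; rfl
  have key : ∀ {k : ℕ} (Wf : Fin k → Ultrafilter I), F = ⨆ j, (Wf j : Filter I) →
      ∀ (W : Ultrafilter I), (W : Filter I) ≤ F → ∃ j, W = Wf j := by
    intro k Wf hF W hW
    rw [hF, ← Finset.sup_univ_eq_iSup] at hW
    obtain ⟨j, -, hle⟩ := ultra_le_finset_sup W _ _ hW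
    exact ⟨j, Ultrafilter.coe_le_coe.mp hle⟩
  have hrange : Set.range U = Set.range V := by
    apply Set.Subset.antisymm
    · rintro _ ⟨j, rfl⟩
      obtain ⟨i, hi⟩ := key V hFV (U j) (by rw [hFU]; exact le_iSup (fun j => (U j : Filter I)) j)
      exact ⟨i, hi.symm⟩
    · rintro _ ⟨j, rfl⟩
      obtain ⟨i, hi⟩ := key U hFU (V j) (by rw [hFV]; exact le_iSup (fun j => (V j : Filter I)) j)
      exact ⟨i, hi.symm⟩
  refine ⟨hrange, ?_, ?_⟩
  · -- m belongs to the set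
    intro J hdisj hcov
    have hex : ∀ j : Fin m, ∃ s, J s ∈ U j := by
      intro j
      by_contra h
      push_neg at h
      have h2 : ∀ s, (J s)ᶜ ∈ U j := fun s => Ultrafilter.compl_mem_iff_notMem.mpr (h s)
      have h3 : (⋂ s, (J s)ᶜ) ∈ (U j : Filter I) := Filter.iInter_mem.mpr h2
      rw [← Set.compl_iUnion, hcov, Set.compl_univ] at h3
      exact (U j).neBot.ne (Filter.empty_mem_iff_bot.mp h3)
    choose t ht using hex
    have hnsurj : ¬ Function.Surjective t := by
      intro hs
      have := Fintype.card_le_of_surjective t hs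
      simp only [Fintype.card_fin] at this
      omega
    simp only [Function.Surjective, not_forall, not_exists] at hnsurj
    obtain ⟨s, hs⟩ := hnsurj
    refine ⟨s, (hmemF _).mpr fun j => ?_⟩
    have hsub : J (t j) ⊆ (J s)ᶜ := (hdisj (hs j)).subset_compl_right
    exact Filter.mem_of_superset (ht j) hsub
  · -- lower bound
    intro n hn
    by_contra hlt
    push_neg at hlt
    -- hlt : n < m
    have hsep : ∀ i j : Fin m, ∃ B : Set I, i ≠ j → (B ∈ U i ∧ B ∉ U j) := by
      intro i j
      by_cases hij : i = j
      · exact ⟨Set.univ, fun h => absurd hij h⟩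
      · have hexB : ∃ B, B ∈ U i ∧ B ∉ U j := by
          by_contra h
          push_neg at h
          have hle : (U j : Filter I) ≤ (U i : Filter I) := fun B hB => h B hB
          exact hij (hU (Ultrafilter.coe_le_coe.mp hle).symm)
        obtain ⟨B, h1, h2⟩ := hexB
        exact ⟨B, fun _ => ⟨h1, h2⟩⟩
    choose C hC using hsep
    set A : Fin m → Set I := fun j => ⋂ i, (if i = j then Set.univ else C j i ∩ (C i j)ᶜ) with hA
    have hAmem : ∀ j, A j ∈ U j := by
      intro j
      apply Filter.iInter_mem.mpr
      intro i
      by_cases hij : i = j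
      · simp [hij]
      · simp only [if_neg hij]
        exact Filter.inter_mem (hC j i (Ne.symm hij)).1
          (Ultrafilter.compl_mem_iff_notMem.mpr (hC i j hij).2)
    have hAdisj : ∀ j k : Fin m, j ≠ k → Disjoint (A j) (A k) := by
      intro j k hjk
      rw [Set.disjoint_left]
      intro x hxj hxk
      have h1 : x ∈ C j k ∩ (C k j)ᶜ := by
        have := Set.mem_iInter.mp hxj k
        rwa [if_neg (Ne.symm hjk)] at this
      have h2 : x ∈ C k j ∩ (C j k)ᶜ := by
        have := Set.mem_iInter.mp hxk j
        rwa [if_neg hjk] at this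
      exact h2.2 h1.1
    let g : Fin n → Fin m := fun i => ⟨i.1, by omega⟩
    let jn : Fin m := ⟨n, hlt⟩
    let J : Fin (n + 1) → Set I := fun s =>
      if h : (s : ℕ) < n then A (g ⟨(s : ℕ), h⟩) else (⋃ i, A (g i))ᶜ
    have hJdisj : Pairwise (Disjoint on J) := by
      intro s t hst
      simp only [onFun, J]
      by_cases hs : (s : ℕ) < n <;> by_cases ht : (t : ℕ) < n
      · rw [dif_pos hs, dif_pos ht]
        apply hAdisj
        intro he
        apply hst
        have h1 : (s : ℕ) = (t : ℕ) := by
          have h2 := congrArg Fin.val he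
          simpa [g] using h2
        exact Fin.ext h1
      · rw [dif_pos hs, dif_neg ht, Set.disjoint_left]
        intro x hx hx2
        exact hx2 (Set.mem_iUnion.mpr ⟨⟨(s : ℕ), hs⟩, hx⟩)
      · rw [dif_neg hs, dif_pos ht, Set.disjoint_left]
        intro x hx hx2
        exact hx (Set.mem_iUnion.mpr ⟨⟨(t : ℕ), ht⟩, hx2⟩)
      · exact absurd (Fin.ext (by omega : (s : ℕ) = (t : ℕ))) hst
    have hJcov : (⋃ s, J s) = Set.univ := by
      ext x
      simp only [Set.mem_univ, iff_true, Set.mem_iUnion]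
      by_cases hx : x ∈ ⋃ i, A (g i)
      · obtain ⟨i, hi⟩ := Set.mem_iUnion.mp hx
        refine ⟨⟨i.1, by omega⟩, ?_⟩
        simp only [J]
        rw [dif_pos (show ((⟨i.1, by omega⟩ : Fin (n+1)) : ℕ) < n from i.2)]
        exact hi
      · refine ⟨⟨n, by omega⟩, ?_⟩
        simp only [J]
        rw [dif_neg (by simp)]
        exact hx
    obtain ⟨s, hsF⟩ := hn J hJdisj hJcov
    by_cases hs : (s : ℕ) < n
    · have hc : (A (g ⟨(s : ℕ), hs⟩))ᶜ ∈ U (g ⟨(s : ℕ), hs⟩) := by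
        have := (hmemF _).mp hsF (g ⟨(s : ℕ), hs⟩)
        simpa only [J, dif_pos hs] using this
      exact Ultrafilter.compl_mem_iff_notMem.mp hc (hAmem _)
    · have hmem : (⋃ i, A (g i)) ∈ U jn := by
        have := (hmemF _).mp hsF jn
        simpa only [J, dif_neg hs, compl_compl] using this
      have hc : (⋃ i, A (g i))ᶜ ∈ U jn := by
        apply Filter.mem_of_superset (hAmem jn)
        intro x hx hx2
        obtain ⟨i, hi⟩ := Set.mem_iUnion.mp hx2
        have hne : jn ≠ g i := by
          intro he
          have := congrArg Fin.val he
          simp only [jn, g] at this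
          omega
        exact Set.disjoint_left.mp (hAdisj jn (g i) hne) hx hi
      exact Ultrafilter.compl_mem_iff_notMem.mp hc hmem
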